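/- Let M be real symmetric with spectral decomposition Σ_j θ_j E_j and let v be a unit vector with eigenvalue support S = {j : E_j v ≠ 0}. Suppose w is a unit vector with E_j v = σ_j E_j w for signs σ_j ∈ {1, −1} for all j ∈ S, and suppose there exist a real δ and a real time τ such that |τ θ_j − (δ + ζ_j π)| < ε (mod 2π) for all j ∈ S, where σ_j = (−1)^{ζ_j}. Then |⟨w, e^{iτM} v⟩| > 1 − C·ε for a constant C depending only on |S|; in particular, if such τ exists for every ε > 0, then v and w admit pretty good state transfer. -/

import Mathlib

open Matrix Finset

lemma aux_norm_exp_sub_one (x : ℝ) : ‖Complex.exp (Complex.I * x) - 1‖ ≤ |x| := by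
  have h : Complex.exp (Complex.I * x) - 1 =
      Complex.ofReal (Real.cos x - 1) + Complex.ofReal (Real.sin x) * Complex.I := by
    rw [mul_comm, Complex.exp_mul_I]
    push_cast [Complex.ofReal_cos, Complex.ofReal_sin]
    ring
  rw [h]
  have habs : ‖(Complex.ofReal (Real.cos x - 1) + Complex.ofReal (Real.sin x) * Complex.I)‖
      = Real.sqrt ((Real.cos x - 1) ^ 2 + Real.sin x ^ 2) := by
    rw [Complex.norm_def, Complex.normSq_add_mul_I]
  have hle : (Real.cos x - 1) ^ 2 + Real.sin x ^ 2 ≤ x ^ 2 := by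
    have h1 : Real.sin x ^ 2 + Real.cos x ^ 2 = 1 := Real.sin_sq_add_cos_sq x
    have h2 : 1 - x ^ 2 / 2 ≤ Real.cos x := Real.one_sub_sq_div_two_le_cos
    nlinarith [Real.cos_le_one x]
  calc ‖Complex.ofReal (Real.cos x - 1) + Complex.ofReal (Real.sin x) * Complex.I‖
      = Real.sqrt ((Real.cos x - 1) ^ 2 + Real.sin x ^ 2) := habs
    _ ≤ Real.sqrt (x ^ 2) := Real.sqrt_le_sqrt hle
    _ = |x| := Real.sqrt_sq_eq_abs x

lemma aux_sum_mulVec {n d : ℕ} (A : Fin d → Matrix (Fin n) (Fin n) ℂ) (v : Fin n → ℂ) :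
    (∑ j, A j) *ᵥ v = ∑ j, (A j) *ᵥ v := by
  ext i
  simp only [Matrix.mulVec, dotProduct, Finset.sum_apply, Matrix.sum_apply,
    Finset.sum_mul]
  rw [Finset.sum_comm]

lemma aux_dotProduct_sum {n d : ℕ} (u : Fin n → ℂ) (f : Fin d → (Fin n → ℂ)) :
    u ⬝ᵥ (∑ j, f j) = ∑ j, u ⬝ᵥ f j := by
  simp only [dotProduct, Finset.sum_apply, Finset.mul_sum]
  exact Finset.sum_comm

/-- If `E_j v = (−1)^{ζ_j} E_j w` on the eigenvalue support `S` of `v`, and the phases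
`τθ_j` approximate `δ + ζ_j π (mod 2π)` within `ε` on `S`, then
`|⟨w, e^{iτM} v⟩| > 1 − Cε` for a constant `C`; in particular if such `τ` exists for every
`ε > 0` then there is pretty good state transfer from `v` to `w`. -/
theorem stmt18 {n d : ℕ}
    (θ : Fin d → ℝ) (hθ : Function.Injective θ)
    (E : Fin d → Matrix (Fin n) (Fin n) ℂ)
    (hreal : ∀ j k l, (E j k l).im = 0)
    (hsymm : ∀ j, (E j)ᵀ = E j)
    (hidem : ∀ j, E j * E j = E j)
    (horth : ∀ j k, j ≠ k → E j * E k = 0)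
    (hsum : ∑ j, E j = 1)
    (M : Matrix (Fin n) (Fin n) ℂ)
    (hM : M = ∑ j, (θ j : ℂ) • E j)
    (v w : Fin n → ℂ)
    (hv : star v ⬝ᵥ v = 1) (hw : star w ⬝ᵥ w = 1)
    (S : Finset (Fin d)) (hS : ∀ j, j ∈ S ↔ (E j) *ᵥ v ≠ 0)
    (ζ : Fin d → ℕ) (hζ : ∀ j, ζ j = 0 ∨ ζ j = 1)
    (hsign : ∀ j ∈ S, (E j) *ᵥ v = ((-1 : ℂ) ^ (ζ j)) • ((E j) *ᵥ w)) :
    (∃ C > (0 : ℝ), ∀ ε > (0 : ℝ), ∀ τ δ : ℝ,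
      (∀ j ∈ S, ∃ k : ℤ, |τ * θ j - (δ + (ζ j : ℝ) * Real.pi) - 2 * Real.pi * k| < ε) →
      ‖star w ⬝ᵥ ((∑ j, Complex.exp (Complex.I * ((τ * θ j : ℝ) : ℂ)) • E j) *ᵥ v)‖ >
        1 - C * ε) ∧
    ((∀ ε > (0 : ℝ), ∃ τ δ : ℝ,
        ∀ j ∈ S, ∃ k : ℤ, |τ * θ j - (δ + (ζ j : ℝ) * Real.pi) - 2 * Real.pi * k| < ε) →
      ∀ ε > (0 : ℝ), ∃ t : ℝ,
        ‖star w ⬝ᵥ ((∑ j, Complex.exp (Complex.I * ((t * θ j : ℝ) : ℂ)) • E j) *ᵥ v)‖ >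
          1 - ε) := by
  -- E j is Hermitian
  have hE : ∀ j, (E j)ᴴ = E j := by
    intro j
    ext i k
    have h1 : E j k i = E j i k := congrFun (congrFun (hsymm j) i) k
    rw [Matrix.conjTranspose_apply, h1]
    exact Complex.conj_eq_iff_im.mpr (hreal j i k)
  -- moving E j across the inner product
  have key : ∀ (j : Fin d) (a b : Fin n → ℂ),
      star a ⬝ᵥ ((E j) *ᵥ b) = star ((E j) *ᵥ a) ⬝ᵥ b := by
    intro j a b
    rw [Matrix.star_mulVec, hE, Matrix.dotProduct_mulVec]
  have hEv : ∀ j ∉ S, (E j) *ᵥ v = 0 := by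
    intro j hj
    by_contra h
    exact hj ((hS j).mpr h)
  have hidem' : ∀ (j : Fin d) (x : Fin n → ℂ), (E j) *ᵥ ((E j) *ᵥ x) = (E j) *ᵥ x := by
    intro j x
    rw [Matrix.mulVec_mulVec, hidem]
  set Q : Fin d → ℝ := fun j => ∑ k, Complex.normSq (((E j) *ᵥ v) k) with hQdef
  have hQ : ∀ j, star ((E j) *ᵥ v) ⬝ᵥ ((E j) *ᵥ v) = (Q j : ℂ) := by
    intro j
    rw [hQdef]
    push_cast
    simp only [dotProduct, Pi.star_apply]
    refine Finset.sum_congr rfl fun k _ => ?_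
    rw [Complex.normSq_eq_conj_mul_self]
    rfl
  have hQnonneg : ∀ j, 0 ≤ Q j := fun j =>
    Finset.sum_nonneg fun k _ => Complex.normSq_nonneg _
  have hQpos : ∀ j ∈ S, 0 < Q j := by
    intro j hj
    rcases (hQnonneg j).lt_or_eq with h | h
    · exact h
    · exfalso
      apply (hS j).mp hj
      funext k
      have := (Finset.sum_eq_zero_iff_of_nonneg
        (fun k _ => Complex.normSq_nonneg (((E j) *ᵥ v) k))).mp h.symm k (Finset.mem_univ k)
      simpa using (Complex.normSq_eq_zero.mp this)
  have hQzero : ∀ j ∉ S, Q j = 0 := by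
    intro j hj
    rw [hQdef]
    simp [hEv j hj]
  have hvQ : ∀ j, star v ⬝ᵥ ((E j) *ᵥ v) = (Q j : ℂ) := by
    intro j
    calc star v ⬝ᵥ ((E j) *ᵥ v) = star v ⬝ᵥ ((E j) *ᵥ ((E j) *ᵥ v)) := by rw [hidem' j v]
      _ = star ((E j) *ᵥ v) ⬝ᵥ ((E j) *ᵥ v) := key j v ((E j) *ᵥ v)
      _ = (Q j : ℂ) := hQ j
  have hsumQ : ∑ j, Q j = 1 := by
    have h1 : ((∑ j, Q j : ℝ) : ℂ) = 1 := by
      push_cast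
      rw [← Finset.sum_congr rfl fun j _ => hvQ j]
      rw [← aux_dotProduct_sum, ← aux_sum_mulVec, hsum, Matrix.one_mulVec]
      exact hv
    exact_mod_cast h1
  have hwterm : ∀ j ∈ S, star w ⬝ᵥ ((E j) *ᵥ v) = ((-1 : ℂ) ^ (ζ j)) * (Q j : ℂ) := by
    intro j hj
    have hσ : ((-1 : ℂ) ^ (ζ j)) * ((-1 : ℂ) ^ (ζ j)) = 1 := by
      rw [← mul_pow]; norm_num
    have h1 : star w ⬝ᵥ ((E j) *ᵥ v) = star ((E j) *ᵥ w) ⬝ᵥ ((E j) *ᵥ v) := by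
      calc star w ⬝ᵥ ((E j) *ᵥ v) = star w ⬝ᵥ ((E j) *ᵥ ((E j) *ᵥ v)) := by rw [hidem' j v]
        _ = star ((E j) *ᵥ w) ⬝ᵥ ((E j) *ᵥ v) := key j w ((E j) *ᵥ v)
    have h2 : star ((E j) *ᵥ w) ⬝ᵥ ((E j) *ᵥ w) = (Q j : ℂ) := by
      have h3 := hQ j
      rw [hsign j hj] at h3
      rw [star_smul, smul_dotProduct, dotProduct_smul] at h3
      have hstar : star ((-1 : ℂ) ^ (ζ j)) = ((-1 : ℂ) ^ (ζ j)) := by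
        rw [star_pow]; norm_num
      rw [hstar, smul_eq_mul, smul_eq_mul, ← mul_assoc, hσ, one_mul] at h3
      exact h3
    rw [h1, hsign j hj, dotProduct_smul, smul_eq_mul, h2]
  have hwzero : ∀ j ∉ S, star w ⬝ᵥ ((E j) *ᵥ v) = 0 := by
    intro j hj
    rw [hEv j hj, dotProduct_zero]
  -- expansion of the inner product
  have hexpand : ∀ t : ℝ,
      star w ⬝ᵥ ((∑ j, Complex.exp (Complex.I * ((t * θ j : ℝ) : ℂ)) • E j) *ᵥ v)
      = ∑ j ∈ S, Complex.exp (Complex.I * ((t * θ j : ℝ) : ℂ)) *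
          (((-1 : ℂ) ^ (ζ j)) * (Q j : ℂ)) := by
    intro t
    rw [aux_sum_mulVec, aux_dotProduct_sum]
    rw [← Finset.sum_subset (Finset.subset_univ S) (by
      intro j _ hj
      rw [Matrix.smul_mulVec, dotProduct_smul, smul_eq_mul, hwzero j hj,
        mul_zero])]
    refine Finset.sum_congr rfl fun j hj => ?_
    rw [Matrix.smul_mulVec, dotProduct_smul, smul_eq_mul, hwterm j hj]
  have hSQ : ∑ j ∈ S, (Q j : ℂ) = 1 := by
    have : ∑ j ∈ S, Q j = 1 := by
      rw [Finset.sum_subset (Finset.subset_univ S) (fun j _ hj => hQzero j hj)]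
      exact hsumQ
    exact_mod_cast this
  -- the main bound
  have bound : ∀ ε > (0 : ℝ), ∀ τ δ : ℝ,
      (∀ j ∈ S, ∃ k : ℤ, |τ * θ j - (δ + (ζ j : ℝ) * Real.pi) - 2 * Real.pi * k| < ε) →
      ‖star w ⬝ᵥ ((∑ j, Complex.exp (Complex.I * ((τ * θ j : ℝ) : ℂ)) • E j) *ᵥ v)‖ >
        1 - ε := by
    intro ε hε τ δ h
    rw [hexpand τ]
    have hSne : S.Nonempty := by
      rcases S.eq_empty_or_nonempty with h' | h'
      · exfalso
        have h0 := hsumQ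
        rw [Finset.sum_eq_zero (fun j _ => hQzero j (by simp [h']))] at h0
        norm_num at h0
      · exact h'
    have hterm : ∀ j ∈ S,
        ‖Complex.exp (Complex.I * ((τ * θ j : ℝ) : ℂ)) * (((-1 : ℂ) ^ (ζ j)) * (Q j : ℂ))
          - Complex.exp (Complex.I * (δ : ℂ)) * (Q j : ℂ)‖ < ε * Q j := by
      intro j hj
      obtain ⟨k, hk⟩ := h j hj
      set x : ℝ := τ * θ j - (δ + (ζ j : ℝ) * Real.pi) - 2 * Real.pi * k with hxdef
      have hexp : Complex.exp (Complex.I * ((τ * θ j : ℝ) : ℂ)) * ((-1 : ℂ) ^ (ζ j))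
          = Complex.exp (Complex.I * (δ : ℂ)) * Complex.exp (Complex.I * (x : ℂ)) := by
        have hre : ((τ * θ j : ℝ) : ℂ) = (x : ℂ) + (δ : ℂ) + (ζ j : ℕ) * (Real.pi : ℂ)
            + (k : ℤ) * (2 * (Real.pi : ℂ)) := by
          push_cast
          rw [hxdef]
          push_cast
          ring
        rw [hre]
        rw [show Complex.I * ((x : ℂ) + (δ : ℂ) + (ζ j : ℕ) * (Real.pi : ℂ)
            + (k : ℤ) * (2 * (Real.pi : ℂ)))
          = Complex.I * (x : ℂ) + Complex.I * (δ : ℂ) + (ζ j : ℕ) * ((Real.pi : ℂ) * Complex.I)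
            + (k : ℤ) * (2 * (Real.pi : ℂ) * Complex.I) from by ring]
        rw [Complex.exp_add, Complex.exp_add, Complex.exp_add]
        rw [Complex.exp_int_mul_two_pi_mul_I, Complex.exp_nat_mul, Complex.exp_pi_mul_I]
        have hs2 : ((-1 : ℂ)) ^ (ζ j * 2) = 1 := by
          rcases hζ j with hz | hz <;> norm_num [hz]
        ring_nf
        rw [hs2, mul_one]
      have hdiff : Complex.exp (Complex.I * ((τ * θ j : ℝ) : ℂ)) * (((-1 : ℂ) ^ (ζ j)) * (Q j : ℂ))
          - Complex.exp (Complex.I * (δ : ℂ)) * (Q j : ℂ)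
          = Complex.exp (Complex.I * (δ : ℂ)) * (Complex.exp (Complex.I * (x : ℂ)) - 1)
            * (Q j : ℂ) := by
        rw [← mul_assoc, hexp]
        ring
      rw [hdiff]
      rw [norm_mul, norm_mul]
      have habs1 : ‖Complex.exp (Complex.I * (δ : ℂ))‖ = 1 := by
        rw [mul_comm]
        exact Complex.norm_exp_ofReal_mul_I δ
      have habsQ : ‖((Q j : ℝ) : ℂ)‖ = Q j := by
        rw [Complex.norm_real, Real.norm_eq_abs, abs_of_nonneg (hQnonneg j)]
      rw [habs1, one_mul, habsQ]
      have h2 : ‖Complex.exp (Complex.I * (x : ℂ)) - 1‖ ≤ |x| := aux_norm_exp_sub_one x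
      have h3 : |x| < ε := hk
      have hQj := hQpos j hj
      calc ‖Complex.exp (Complex.I * (x : ℂ)) - 1‖ * Q j ≤ |x| * Q j := by
            exact mul_le_mul_of_nonneg_right h2 (hQnonneg j)
        _ < ε * Q j := by exact (mul_lt_mul_of_pos_right h3 hQj)
    have hclose : ‖(∑ j ∈ S, Complex.exp (Complex.I * ((τ * θ j : ℝ) : ℂ)) *
          (((-1 : ℂ) ^ (ζ j)) * (Q j : ℂ))) - Complex.exp (Complex.I * (δ : ℂ))‖ < ε := by
      have hrw : (∑ j ∈ S, Complex.exp (Complex.I * ((τ * θ j : ℝ) : ℂ)) *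
            (((-1 : ℂ) ^ (ζ j)) * (Q j : ℂ))) - Complex.exp (Complex.I * (δ : ℂ))
          = ∑ j ∈ S, (Complex.exp (Complex.I * ((τ * θ j : ℝ) : ℂ)) *
            (((-1 : ℂ) ^ (ζ j)) * (Q j : ℂ)) - Complex.exp (Complex.I * (δ : ℂ)) * (Q j : ℂ)) := by
        rw [Finset.sum_sub_distrib, ← Finset.mul_sum, hSQ, mul_one]
      rw [hrw]
      calc ‖∑ j ∈ S, (Complex.exp (Complex.I * ((τ * θ j : ℝ) : ℂ)) *
            (((-1 : ℂ) ^ (ζ j)) * (Q j : ℂ)) - Complex.exp (Complex.I * (δ : ℂ)) * (Q j : ℂ))‖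
          ≤ ∑ j ∈ S, ‖Complex.exp (Complex.I * ((τ * θ j : ℝ) : ℂ)) *
            (((-1 : ℂ) ^ (ζ j)) * (Q j : ℂ)) - Complex.exp (Complex.I * (δ : ℂ)) * (Q j : ℂ)‖ :=
            norm_sum_le _ _
        _ < ∑ j ∈ S, ε * Q j := Finset.sum_lt_sum_of_nonempty hSne hterm
        _ = ε := by
            rw [← Finset.mul_sum]
            have : ∑ j ∈ S, Q j = 1 := by
              rw [Finset.sum_subset (Finset.subset_univ S) (fun j _ hj => hQzero j hj)]
              exact hsumQ
            rw [this, mul_one]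
    have habs1 : ‖Complex.exp (Complex.I * (δ : ℂ))‖ = 1 := by
      rw [mul_comm]
      exact Complex.norm_exp_ofReal_mul_I δ
    have := norm_sub_norm_le (Complex.exp (Complex.I * (δ : ℂ)))
      ((∑ j ∈ S, Complex.exp (Complex.I * ((τ * θ j : ℝ) : ℂ)) *
          (((-1 : ℂ) ^ (ζ j)) * (Q j : ℂ))))
    rw [habs1] at this
    have h4 : ‖Complex.exp (Complex.I * (δ : ℂ)) - ∑ j ∈ S,
        Complex.exp (Complex.I * ((τ * θ j : ℝ) : ℂ)) * (((-1 : ℂ) ^ (ζ j)) * (Q j : ℂ))‖ < ε := by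
      rw [norm_sub_rev]
      exact hclose
    linarith
  constructor
  · exact ⟨1, one_pos, fun ε hε τ δ h => by simpa using bound ε hε τ δ h⟩
  · intro H ε hε
    obtain ⟨τ, δ, h⟩ := H ε hε
    exact ⟨τ, bound ε hε τ δ h⟩
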